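/- Let d and k be natural numbers and let θ ∈ (0,1]. There exists a constant C > 0 (depending only on d, k and θ) such that for every nondegenerate simplex T ⊆ ℝ^d, every polynomial function p : ℝ^d → ℝ of total degree at most k, and every Lebesgue-measurable set S ⊆ T with μ(S) ≥ θ·μ(T), one has ∫_T p(x)² dμ(x) ≤ C · ∫_S p(x)² dμ(x). (The constant is uniform over all nondegenerate simplices, since both sides and the constraint μ(S) ≥ θ·μ(T) transform compatibly under invertible affine maps.) -/

import Mathlib

open MeasureTheory


theorem mvpoly_zero_set_null : ∀ (d : ℕ) (p : MvPolynomial (Fin d) ℝ), p ≠ 0 →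
    volume {x : Fin d → ℝ | MvPolynomial.eval x p = 0} = 0 := by
  intro d
  induction d with
  | zero =>
    intro p hp
    convert measure_empty
    · ext x
      simp only [Set.mem_setOf_eq, Set.mem_empty_iff_false, iff_false]
      obtain ⟨r, rfl⟩ := (MvPolynomial.isEmptyAlgEquiv ℝ (Fin 0)).symm.surjective p
      have hr : (MvPolynomial.isEmptyAlgEquiv ℝ (Fin 0)).symm r = MvPolynomial.C r := by
        have := (MvPolynomial.isEmptyAlgEquiv ℝ (Fin 0)).symm.commutes r
        simpa using this
      rw [hr] at hp ⊢
      simp only [MvPolynomial.eval_C]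
      exact fun h => hp (by rw [h]; simp)
    · infer_instance
  | succ d ih =>
    intro p hp
    set P := MvPolynomial.finSuccEquiv ℝ d p with hPdef
    have hP : P ≠ 0 := by
      intro h
      apply hp
      have := congrArg (MvPolynomial.finSuccEquiv ℝ d).symm h
      simpa [hPdef] using this
    obtain ⟨i, hi⟩ : ∃ i, P.coeff i ≠ 0 := by
      by_contra h
      push_neg at h
      exact hP (Polynomial.ext fun n => by simp [h n])
    set N := {x : Fin d → ℝ | MvPolynomial.eval x (P.coeff i) = 0} with hNdef
    have hN : volume N = 0 := ih _ hi
    set W : Set ((Fin d → ℝ) × ℝ) :=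
      {q | MvPolynomial.eval (Fin.cons q.2 q.1) p = 0} with hWdef
    have hcont : Continuous fun q : (Fin d → ℝ) × ℝ =>
        MvPolynomial.eval (Fin.cons q.2 q.1 : Fin (d+1) → ℝ) p := by
      apply (MvPolynomial.continuous_eval p).comp
      apply continuous_pi
      intro j
      refine Fin.cases ?_ (fun j' => ?_) j
      · simpa using continuous_snd
      · simpa [Function.comp_def] using (continuous_apply j').comp continuous_fst
    have hWm : MeasurableSet W := (isClosed_eq hcont continuous_const).measurableSet
    have hW : (volume.prod volume) W = 0 := by
      rw [Measure.measure_prod_null hWm]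
      have hae : ∀ᵐ x : Fin d → ℝ, x ∉ N := by
        rw [← compl_compl N] at hN ⊢
        exact (ae_iff.2 (by simpa using hN))
      filter_upwards [hae] with x hx
      have hq : Polynomial.map (MvPolynomial.eval x) P ≠ 0 := by
        intro h
        apply hx
        have : (Polynomial.map (MvPolynomial.eval x) P).coeff i = 0 := by rw [h]; simp
        rw [Polynomial.coeff_map] at this
        exact this
      have : (Prod.mk x ⁻¹' W) = {y : ℝ | Polynomial.IsRoot (Polynomial.map (MvPolynomial.eval x) P) y} := by
        ext y
        simp only [Set.mem_preimage, hWdef, Set.mem_setOf_eq, Polynomial.IsRoot]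
        rw [MvPolynomial.eval_eq_eval_mv_eval']
      rw [this]
      exact (Polynomial.finite_setOf_isRoot hq).measure_zero _
    -- transfer back
    set F : (Fin (d+1) → ℝ) → (Fin d → ℝ) × ℝ :=
      fun x => (fun j => x ((0 : Fin (d+1)).succAbove j), x 0) with hFdef
    have hmp : MeasurePreserving F volume (volume.prod volume) := by
      have h1 := volume_preserving_piFinSuccAbove (fun _ : Fin (d+1) => ℝ) 0
      have h2 : MeasurePreserving (Prod.swap) (volume : Measure (ℝ × (Fin d → ℝ)))
          ((volume : Measure (Fin d → ℝ)).prod volume) := by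
        rw [show (volume : Measure (ℝ × (Fin d → ℝ))) = (volume : Measure ℝ).prod volume from rfl]
        exact Measure.measurePreserving_swap
      exact h2.comp h1
    have hZ : {x : Fin (d+1) → ℝ | MvPolynomial.eval x p = 0} = F ⁻¹' W := by
      ext x
      simp only [Set.mem_setOf_eq, Set.mem_preimage, hWdef, hFdef]
      have : (Fin.cons (x 0) (fun j => x ((0 : Fin (d+1)).succAbove j)) : Fin (d+1) → ℝ) = x := by
        funext j
        refine Fin.cases ?_ (fun j' => ?_) j
        · simp
        · simp [Fin.succAbove_zero]
      rw [this]
    rw [hZ, hmp.measure_preimage hWm.nullMeasurableSet, hW]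



noncomputable section
set_option synthInstance.maxHeartbeats 1000000
set_option maxHeartbeats 1000000
open MvPolynomial

def Vsp (d k : ℕ) : Submodule ℝ (MvPolynomial (Fin d) ℝ) := restrictTotalDegree (Fin d) ℝ k

instance VspFin (d k : ℕ) : Module.Finite ℝ (Vsp d k) :=
  inferInstanceAs (Module.Finite ℝ (restrictTotalDegree (Fin d) ℝ k))

def nn (d k : ℕ) : ℕ := Module.finrank ℝ (Vsp d k)

def bb (d k : ℕ) : Module.Basis (Fin (nn d k)) ℝ (Vsp d k) := Module.finBasis ℝ (Vsp d k)

def Phi (d k : ℕ) : (Fin (nn d k) → ℝ) →ₗ[ℝ] MvPolynomial (Fin d) ℝ :=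
  (Vsp d k).subtype.comp ((bb d k).equivFun.symm : (Fin (nn d k) → ℝ) ≃ₗ[ℝ] Vsp d k).toLinearMap

theorem core_ineq (d k : ℕ) (θ : ℝ) (hθ : θ ∈ Set.Ioc (0 : ℝ) 1)
    (Δ : Set (Fin d → ℝ)) (hΔc : IsCompact Δ) (hΔm : MeasurableSet Δ)
    (hΔpos : 0 < volume Δ) :
    ∃ C : ℝ, 0 < C ∧ ∀ p : MvPolynomial (Fin d) ℝ, p.totalDegree ≤ k →
      ∀ S : Set (Fin d → ℝ), MeasurableSet S → S ⊆ Δ →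
        ENNReal.ofReal θ * volume Δ ≤ volume S →
        ∫ x in Δ, (eval x p) ^ 2 ≤ C * ∫ x in S, (eval x p) ^ 2 := by
  have hΔfin : volume Δ ≠ ⊤ := hΔc.measure_lt_top.ne
  set V := Vsp d k with hV
  set n := nn d k with hn
  set b := bb d k with hb
  set Φ := Phi d k with hΦdef
  have hΦapp : ∀ a : Fin n → ℝ, Φ a = ((b.equivFun.symm a : V) : MvPolynomial (Fin d) ℝ) :=
    fun a => rfl
  have hΦ0 : ∀ a : Fin n → ℝ, Φ a = 0 → a = 0 := by
    intro a ha
    rw [hΦapp] at ha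
    have h2 : (b.equivFun.symm a : V) = 0 := Submodule.coe_eq_zero.1 ha
    exact b.equivFun.symm.map_eq_zero_iff.1 h2
  have hcont : ∀ q : MvPolynomial (Fin d) ℝ, Continuous fun x : Fin d → ℝ => eval x q :=
    fun q => MvPolynomial.continuous_eval q
  obtain ⟨K, hKpos, hKb⟩ : ∃ K : ℝ, 0 < K ∧
      ∀ x ∈ Δ, ∑ i : Fin n, |eval x (Φ (Pi.single i 1))| ≤ K := by
    obtain ⟨K0, hK0⟩ := hΔc.exists_bound_of_continuousOn
      (Continuous.continuousOn (continuous_finset_sum _ fun i _ => (hcont _).abs))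
    refine ⟨max K0 1, lt_of_lt_of_le one_pos (le_max_right _ _), fun x hx => ?_⟩
    have := hK0 x hx
    rw [Real.norm_eq_abs, abs_of_nonneg (Finset.sum_nonneg fun i _ => abs_nonneg _)] at this
    exact le_trans this (le_max_left _ _)
  have hdecomp : ∀ (a : Fin n → ℝ) (x : Fin d → ℝ),
      eval x (Φ a) = ∑ i : Fin n, a i * eval x (Φ (Pi.single i 1)) := by
    intro a x
    have ha : a = ∑ i : Fin n, a i • (Pi.single i 1 : Fin n → ℝ) := by
      funext j
      simp [Finset.sum_apply, Pi.single_apply, mul_ite, Finset.sum_ite_eq]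
    calc eval x (Φ a) = eval x (Φ (∑ i : Fin n, a i • (Pi.single i 1 : Fin n → ℝ))) := by rw [← ha]
    _ = eval x (∑ i : Fin n, a i • Φ (Pi.single i 1)) := by rw [map_sum]; simp_rw [_root_.map_smul]
    _ = ∑ i : Fin n, a i * eval x (Φ (Pi.single i 1)) := by
        rw [map_sum (eval x)]; simp_rw [smul_eval]
  have hbound : ∀ (a : Fin n → ℝ), ∀ x ∈ Δ, |eval x (Φ a)| ≤ K * ‖a‖ := by
    intro a x hx
    rw [hdecomp a x]
    have habs : ∀ i : Fin n, |a i| ≤ ‖a‖ := by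
      intro i
      have := norm_le_pi_norm a i
      rwa [Real.norm_eq_abs] at this
    calc |∑ i : Fin n, a i * eval x (Φ (Pi.single i 1))|
        ≤ ∑ i : Fin n, |a i * eval x (Φ (Pi.single i 1))| := Finset.abs_sum_le_sum_abs _ _
    _ = ∑ i : Fin n, |a i| * |eval x (Φ (Pi.single i 1))| := by simp_rw [abs_mul]
    _ ≤ ∑ i : Fin n, ‖a‖ * |eval x (Φ (Pi.single i 1))| :=
        Finset.sum_le_sum fun i _ => mul_le_mul_of_nonneg_right (habs i) (abs_nonneg _)
    _ = ‖a‖ * ∑ i : Fin n, |eval x (Φ (Pi.single i 1))| := by rw [Finset.mul_sum]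
    _ ≤ ‖a‖ * K := mul_le_mul_of_nonneg_left (hKb x hx) (norm_nonneg a)
    _ = K * ‖a‖ := mul_comm _ _
  have hint : ∀ (a : Fin n → ℝ) (S : Set (Fin d → ℝ)), S ⊆ Δ →
      IntegrableOn (fun x => (eval x (Φ a)) ^ 2) S volume := by
    intro a S hS
    exact (((hcont (Φ a)).pow 2).continuousOn.integrableOn_compact hΔc).mono_set hS
  set G : (Fin n → ℝ) → Set (Fin d → ℝ) → ℝ := fun a S => ∫ x in S, (eval x (Φ a)) ^ 2 with hG
  have hGnonneg : ∀ a S, 0 ≤ G a S := fun a S => integral_nonneg fun x => sq_nonneg _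
  have hE : ∀ (a a' : Fin n → ℝ) (S : Set (Fin d → ℝ)), MeasurableSet S → S ⊆ Δ →
      |G a S - G a' S| ≤ (volume Δ).toReal * (K * ‖a - a'‖ * (K * ‖a‖ + K * ‖a'‖)) := by
    intro a a' S hSm hSΔ
    have hfin : volume S < ⊤ := lt_of_le_of_lt (measure_mono hSΔ) hΔc.measure_lt_top
    have hsub : G a S - G a' S = ∫ x in S, ((eval x (Φ a))^2 - (eval x (Φ a'))^2) :=
      (integral_sub (hint a S hSΔ) (hint a' S hSΔ)).symm
    rw [hsub]
    have key : ∀ x ∈ S, ‖(eval x (Φ a))^2 - (eval x (Φ a'))^2‖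
        ≤ K * ‖a - a'‖ * (K * ‖a‖ + K * ‖a'‖) := by
      intro x hx
      have hx' := hSΔ hx
      rw [Real.norm_eq_abs]
      have hfact : (eval x (Φ a))^2 - (eval x (Φ a'))^2
          = (eval x (Φ a) - eval x (Φ a')) * (eval x (Φ a) + eval x (Φ a')) := by ring
      rw [hfact, abs_mul]
      have h1 : |eval x (Φ a) - eval x (Φ a')| ≤ K * ‖a - a'‖ := by
        have := hbound (a - a') x hx'
        rwa [map_sub, map_sub] at this
      have h2 : |eval x (Φ a) + eval x (Φ a')| ≤ K * ‖a‖ + K * ‖a'‖ :=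
        le_trans (abs_add_le _ _) (add_le_add (hbound a x hx') (hbound a' x hx'))
      exact mul_le_mul h1 h2 (abs_nonneg _) (by positivity)
    have hb1 : ‖∫ x in S, ((eval x (Φ a))^2 - (eval x (Φ a'))^2)‖
        ≤ (K * ‖a - a'‖ * (K * ‖a‖ + K * ‖a'‖)) * (volume S).toReal :=
      norm_setIntegral_le_of_norm_le_const_ae hfin
        ((ae_restrict_iff' hSm).2 (Filter.Eventually.of_forall key))
    rw [Real.norm_eq_abs] at hb1
    refine le_trans hb1 ?_
    rw [mul_comm]
    refine mul_le_mul_of_nonneg_right ?_ (by positivity)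
    exact (ENNReal.toReal_le_toReal hfin.ne hΔfin).2 (measure_mono hSΔ)
  set c : ENNReal := ENNReal.ofReal θ * volume Δ with hc
  have hcpos : 0 < c := ENNReal.mul_pos (ENNReal.ofReal_pos.2 hθ.1).ne' hΔpos.ne'
  have hcfin : c ≠ ⊤ := by
    rw [hc]
    exact ENNReal.mul_ne_top ENNReal.ofReal_ne_top hΔfin
  set Adm : Set (Set (Fin d → ℝ)) := {S | MeasurableSet S ∧ S ⊆ Δ ∧ c ≤ volume S} with hAdm
  have hΔAdm : Δ ∈ Adm := by
    refine ⟨hΔm, subset_rfl, ?_⟩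
    calc c = ENNReal.ofReal θ * volume Δ := rfl
    _ ≤ 1 * volume Δ := mul_le_mul_left (ENNReal.ofReal_le_one.2 hθ.2) _
    _ = volume Δ := one_mul _
  set m : (Fin n → ℝ) → ℝ := fun a => sInf ((G a) '' Adm) with hm
  have hmne : ∀ a : Fin n → ℝ, ((G a) '' Adm).Nonempty := fun a => ⟨G a Δ, Δ, hΔAdm, rfl⟩
  have hmbdd : ∀ a : Fin n → ℝ, BddBelow ((G a) '' Adm) := by
    intro a
    refine ⟨0, ?_⟩
    rintro r ⟨S, _, rfl⟩
    exact hGnonneg a S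
  have hmle : ∀ (a : Fin n → ℝ), ∀ S ∈ Adm, m a ≤ G a S :=
    fun a S hS => csInf_le (hmbdd a) ⟨S, hS, rfl⟩
  set L₀ : ℝ := (volume Δ).toReal * (2 * K^2) with hL₀
  have hL₀nonneg : 0 ≤ L₀ := by positivity
  have hmdiff : ∀ a ∈ Metric.sphere (0 : Fin n → ℝ) 1, ∀ a' ∈ Metric.sphere (0 : Fin n → ℝ) 1,
      m a - m a' ≤ L₀ * ‖a - a'‖ := by
    intro a ha a' ha'
    have hna : ‖a‖ = 1 := by simpa using ha
    have hna' : ‖a'‖ = 1 := by simpa using ha'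
    rw [sub_le_comm]
    simp only [hm]
    refine le_csInf (hmne a') ?_
    rintro r ⟨S, hS, rfl⟩
    have hEa := hE a a' S hS.1 hS.2.1
    have h1 : sInf (G a '' Adm) ≤ G a S := hmle a S hS
    have h2 : G a S - G a' S ≤ L₀ * ‖a - a'‖ := by
      refine le_trans (le_trans (le_abs_self _) hEa) ?_
      rw [hna, hna', hL₀]
      exact le_of_eq (by ring)
    linarith
  have habs : ∀ a ∈ Metric.sphere (0 : Fin n → ℝ) 1, ∀ a' ∈ Metric.sphere (0 : Fin n → ℝ) 1,
      |m a - m a'| ≤ L₀ * ‖a - a'‖ := by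
    intro a ha a' ha'
    rw [abs_sub_le_iff]
    exact ⟨hmdiff a ha a' ha', by rw [norm_sub_rev]; exact hmdiff a' ha' a ha⟩
  have hmcont : ContinuousOn m (Metric.sphere (0 : Fin n → ℝ) 1) := by
    refine (LipschitzOnWith.of_dist_le_mul (K := Real.toNNReal L₀) ?_).continuousOn
    intro a ha a' ha'
    rw [Real.dist_eq, Real.coe_toNNReal _ hL₀nonneg, dist_eq_norm]
    exact habs a ha a' ha'
  have hFdiff : ∀ a ∈ Metric.sphere (0 : Fin n → ℝ) 1, ∀ a' ∈ Metric.sphere (0 : Fin n → ℝ) 1,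
      |G a Δ - G a' Δ| ≤ L₀ * ‖a - a'‖ := by
    intro a ha a' ha'
    have hna : ‖a‖ = 1 := by simpa using ha
    have hna' : ‖a'‖ = 1 := by simpa using ha'
    refine le_trans (hE a a' Δ hΔm subset_rfl) ?_
    rw [hna, hna', hL₀]
    exact le_of_eq (by ring)
  have hFcont : ContinuousOn (fun a => G a Δ) (Metric.sphere (0 : Fin n → ℝ) 1) := by
    refine (LipschitzOnWith.of_dist_le_mul (K := Real.toNNReal L₀) ?_).continuousOn
    intro a ha a' ha'
    rw [Real.dist_eq, Real.coe_toNNReal _ hL₀nonneg, dist_eq_norm]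
    exact hFdiff a ha a' ha'
  have hmpos : ∀ a ∈ Metric.sphere (0 : Fin n → ℝ) 1, 0 < m a := by
    intro a ha
    have hane : a ≠ 0 := by
      intro h
      rw [h] at ha
      simp at ha
    have hΦa : Φ a ≠ 0 := fun h => hane (hΦ0 a h)
    have hZ := mvpoly_zero_set_null d (Φ a) hΦa
    set E : ℕ → Set (Fin d → ℝ) := fun j => Δ ∩ {x | (eval x (Φ a))^2 ≤ 1/(j+1)} with hEdef
    have hEm : ∀ j, MeasurableSet (E j) := fun j =>
      hΔm.inter (measurableSet_le (((hcont (Φ a)).pow 2).measurable) measurable_const)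
    have hEanti : Antitone E := by
      intro i j hij
      refine Set.inter_subset_inter_right _ ?_
      intro x hx
      simp only [Set.mem_setOf_eq] at hx ⊢
      refine le_trans hx ?_
      rw [div_le_div_iff₀ (by positivity) (by positivity)]
      have : (i : ℝ) ≤ j := Nat.cast_le.2 hij
      linarith
    have hiInter : (⋂ j, E j) ⊆ {x | eval x (Φ a) = 0} := by
      intro x hx
      simp only [Set.mem_iInter] at hx
      by_contra hne
      have hne' : eval x (Φ a) ≠ 0 := hne
      have hpos2 : 0 < (eval x (Φ a))^2 :=
        lt_of_le_of_ne (sq_nonneg _) (Ne.symm (pow_ne_zero 2 hne'))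
      obtain ⟨j, hj⟩ := exists_nat_one_div_lt hpos2
      exact absurd (hx j).2 (not_le.2 hj)
    have hlim := tendsto_measure_iInter_atTop (fun j => (hEm j).nullMeasurableSet) hEanti
      ⟨0, ((lt_of_le_of_lt (measure_mono Set.inter_subset_left) (hΔc.measure_lt_top (μ := volume)))).ne⟩
    have hzero : volume (⋂ j, E j) = 0 := measure_mono_null hiInter hZ
    rw [hzero] at hlim
    obtain ⟨j, hj⟩ := (hlim.eventually_lt_const hcpos).exists
    have hjE : volume (E j) < c := hj
    set δ : ENNReal := c - volume (E j) with hδ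
    have hδpos : 0 < δ := tsub_pos_of_lt hjE
    have hδfin : δ ≠ ⊤ := (lt_of_le_of_lt tsub_le_self hcfin.lt_top).ne
    have hδtr : 0 < δ.toReal := ENNReal.toReal_pos hδpos.ne' hδfin
    have hεpos : (0:ℝ) < 1/(j+1) := by positivity
    refine lt_of_lt_of_le (by positivity : (0:ℝ) < (1/(j+1)) * δ.toReal) ?_
    simp only [hm]
    refine le_csInf (hmne a) ?_
    rintro r ⟨S, hS, rfl⟩
    obtain ⟨hSm, hSΔ, hSc⟩ := hS
    have hmu1 : volume S ≤ volume (S \ E j) + volume (E j) := by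
      refine le_trans (measure_mono ?_) (measure_union_le _ _)
      intro x hx
      by_cases h : x ∈ E j
      · exact Or.inr h
      · exact Or.inl ⟨hx, h⟩
    have hδle : δ ≤ volume (S \ E j) := by
      rw [hδ]
      exact tsub_le_iff_right.2 (le_trans hSc hmu1)
    have hfinSE : volume (S \ E j) ≠ ⊤ :=
      (lt_of_le_of_lt (measure_mono fun x hx => hSΔ hx.1) hΔc.measure_lt_top).ne
    have hstep1 : (1/(j+1) : ℝ) * (volume (S \ E j)).toReal
        ≤ ∫ x in S \ E j, (eval x (Φ a))^2 := by
      refine (le_of_eq (by rw [smul_eq_mul, mul_comm]; rfl)).trans (setIntegral_ge_of_const_le (c := (1/(j+1) : ℝ)) (hSm.diff (hEm j)) hfinSE ?_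
        (hint a _ (fun x hx => hSΔ hx.1)))
      intro x hx
      have hxΔ : x ∈ Δ := hSΔ hx.1
      have hnot : ¬ ((eval x (Φ a))^2 ≤ 1/(j+1)) := fun h => hx.2 ⟨hxΔ, h⟩
      exact (not_le.1 hnot).le
    have hstep2 : ∫ x in S \ E j, (eval x (Φ a))^2 ≤ G a S :=
      setIntegral_mono_set (hint a S hSΔ) (Filter.Eventually.of_forall fun x => sq_nonneg _)
        (HasSubset.Subset.eventuallyLE Set.diff_subset)
    have hδr : δ.toReal ≤ (volume (S \ E j)).toReal :=
      (ENNReal.toReal_le_toReal hδfin hfinSE).2 hδle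
    calc (1/(j+1) : ℝ) * δ.toReal ≤ (1/(j+1) : ℝ) * (volume (S \ E j)).toReal :=
        mul_le_mul_of_nonneg_left hδr hεpos.le
    _ ≤ ∫ x in S \ E j, (eval x (Φ a))^2 := hstep1
    _ ≤ G a S := hstep2
  have hsph : (Metric.sphere (0 : Fin n → ℝ) 1).Nonempty := by
    have hVnt : Nontrivial V := by
      rw [hV]
      refine ⟨⟨⟨1, ?_⟩, 0, ?_⟩⟩
      · show (1 : MvPolynomial (Fin d) ℝ) ∈ restrictTotalDegree (Fin d) ℝ k
        rw [mem_restrictTotalDegree]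
        simp [totalDegree_one]
      · intro h
        have := congrArg (Subtype.val) h
        simpa using this
    have hnt : Nontrivial (Fin n → ℝ) := Equiv.nontrivial (b.equivFun.symm.toEquiv)
    exact NormedSpace.sphere_nonempty.2 zero_le_one
  obtain ⟨amin, haminS, hamin⟩ :=
    (isCompact_sphere (0 : Fin n → ℝ) 1).exists_isMinOn hsph hmcont
  obtain ⟨amax, hamaxS, hamax⟩ :=
    (isCompact_sphere (0 : Fin n → ℝ) 1).exists_isMaxOn hsph hFcont
  have hc₀ : 0 < m amin := hmpos _ haminS
  have hM₀ : 0 ≤ G amax Δ := hGnonneg _ _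
  refine ⟨max (G amax Δ / m amin) 1, lt_of_lt_of_le one_pos (le_max_right _ _), ?_⟩
  intro p hpk S hSm hSΔ hSc
  have hpV : p ∈ V := by
    rw [hV]
    show p ∈ restrictTotalDegree (Fin d) ℝ k
    rw [mem_restrictTotalDegree]
    exact hpk
  set a : Fin n → ℝ := b.equivFun ⟨p, hpV⟩ with hadef
  have hΦa : Φ a = p := by
    rw [hΦapp, hadef, b.equivFun.symm_apply_apply]
  have hSAdm : S ∈ Adm := ⟨hSm, hSΔ, hSc⟩
  have hgoalG : G a Δ ≤ max (G amax Δ / m amin) 1 * G a S := by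
    by_cases ha0 : a = 0
    · have hΦ0' : Φ a = 0 := by rw [ha0, map_zero]
      have : ∀ S', G a S' = 0 := by
        intro S'
        rw [hG]
        simp [hΦ0']
      rw [this Δ, this S]
      simp
    · have htpos : 0 < ‖a‖ := norm_pos_iff.2 ha0
      set u : Fin n → ℝ := ‖a‖⁻¹ • a with hu
      have huS : u ∈ Metric.sphere (0 : Fin n → ℝ) 1 := by
        rw [mem_sphere_iff_norm, sub_zero, hu, norm_smul, norm_inv, norm_norm]
        exact inv_mul_cancel₀ htpos.ne'
      have hscale : ∀ S', G a S' = ‖a‖^2 * G u S' := by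
        intro S'
        have hvals : ∀ x, eval x (Φ a) = ‖a‖ * eval x (Φ u) := by
          intro x
          have haeq : a = ‖a‖ • u := (smul_inv_smul₀ htpos.ne' a).symm
          conv_lhs => rw [haeq]
          rw [_root_.map_smul, smul_eval]
        show (∫ x in S', (eval x (Φ a))^2) = ‖a‖^2 * ∫ x in S', (eval x (Φ u))^2
        have e1 : (∫ x in S', (eval x (Φ a))^2) = ∫ x in S', ‖a‖^2 * (eval x (Φ u))^2 :=
          integral_congr_ae (Filter.Eventually.of_forall fun x => by show (eval x (Φ a))^2 = ‖a‖^2 * (eval x (Φ u))^2; rw [hvals x, mul_pow])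
        rw [e1]
        exact integral_const_mul _ _
      have h1 : G u Δ ≤ G amax Δ := hamax huS
      have h2 : m amin ≤ m u := hamin huS
      have h3 : m u ≤ G u S := hmle u S hSAdm
      calc G a Δ = ‖a‖^2 * G u Δ := hscale Δ
      _ ≤ ‖a‖^2 * G amax Δ := mul_le_mul_of_nonneg_left h1 (sq_nonneg _)
      _ = (G amax Δ / m amin) * (‖a‖^2 * m amin) := by
          field_simp
      _ ≤ (G amax Δ / m amin) * (‖a‖^2 * G u S) := by
          refine mul_le_mul_of_nonneg_left ?_ (div_nonneg hM₀ hc₀.le)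
          exact mul_le_mul_of_nonneg_left (le_trans h2 h3) (sq_nonneg _)
      _ = (G amax Δ / m amin) * G a S := by rw [← hscale S]
      _ ≤ max (G amax Δ / m amin) 1 * G a S :=
          mul_le_mul_of_nonneg_right (le_max_left _ _) (hGnonneg a S)
  rw [hG] at hgoalG
  simp only at hgoalG
  rwa [hΦa] at hgoalG



def stdv (d : ℕ) : Fin (d+1) → (Fin d → ℝ) := Fin.cons 0 (fun j => Pi.single j 1)

lemma stdv_affInd (d : ℕ) : AffineIndependent ℝ (stdv d) := by
  rw [affineIndependent_iff_linearIndependent_vsub ℝ (stdv d) 0]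
  have hfun : (fun i : {x : Fin (d+1) // x ≠ 0} => stdv d ↑i -ᵥ stdv d 0)
      = (fun j : Fin d => (Pi.single j 1 : Fin d → ℝ)) ∘
        (fun i : {x : Fin (d+1) // x ≠ 0} => (i : Fin (d+1)).pred i.2) := by
    funext i
    obtain ⟨i, hi⟩ := i
    obtain ⟨j, rfl⟩ := Fin.eq_succ_of_ne_zero hi
    show stdv d (Fin.succ j) -ᵥ stdv d 0 = Pi.single ((Fin.succ j).pred _) 1
    rw [Fin.pred_succ]
    show stdv d (Fin.succ j) - stdv d 0 = Pi.single j 1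
    simp [stdv, Fin.cons_succ, Fin.cons_zero]
  rw [hfun]
  refine LinearIndependent.comp ?_ _ ?_
  · have h1 := (Pi.basisFun ℝ (Fin d)).linearIndependent
    have heq : ⇑(Pi.basisFun ℝ (Fin d)) = fun j : Fin d => (Pi.single j 1 : Fin d → ℝ) := by
      funext j
      simp
    rwa [heq] at h1
  · intro i j h
    apply Subtype.ext
    have h2 := congrArg Fin.succ h
    rwa [Fin.succ_pred, Fin.succ_pred] at h2

def stdSimp (d : ℕ) : Set (Fin d → ℝ) := convexHull ℝ (Set.range (stdv d))

lemma stdSimp_compact (d : ℕ) : IsCompact (stdSimp d) :=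
  (Set.finite_range _).isCompact_convexHull ℝ

lemma stdSimp_meas (d : ℕ) : MeasurableSet (stdSimp d) :=
  (stdSimp_compact d).isClosed.measurableSet

lemma stdSimp_pos (d : ℕ) : 0 < volume (stdSimp d) := by
  have htop : affineSpan ℝ (Set.range (stdv d)) = ⊤ := by
    rw [(stdv_affInd d).affineSpan_eq_top_iff_card_eq_finrank_add_one]
    simp [Module.finrank_fintype_fun_eq_card]
  obtain ⟨x, hx⟩ := interior_convexHull_nonempty_iff_affineSpan_eq_top.2 htop
  exact lt_of_lt_of_le (isOpen_interior.measure_pos volume ⟨x, hx⟩)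
    (measure_mono interior_subset)

lemma totalDegree_bind₁_le {d : ℕ} (f : Fin d → MvPolynomial (Fin d) ℝ)
    (hf : ∀ i, (f i).totalDegree ≤ 1) (p : MvPolynomial (Fin d) ℝ) :
    (bind₁ f p).totalDegree ≤ p.totalDegree := by
  conv_lhs => rw [p.as_sum]
  rw [map_sum]
  refine le_trans (totalDegree_finset_sum _ _) ?_
  refine Finset.sup_le ?_
  intro m hm
  rw [bind₁_monomial]
  refine le_trans (totalDegree_mul _ _) ?_
  rw [totalDegree_C, zero_add]
  refine le_trans (totalDegree_finset_prod _ _) ?_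
  refine le_trans (Finset.sum_le_sum (fun i _ =>
    le_trans (totalDegree_pow _ _) (Nat.mul_le_mul_left _ (hf i)))) ?_
  simp only [mul_one]
  exact le_totalDegree hm

lemma aeval_id_eq_eval {d : ℕ} (x : Fin d → ℝ) (p : MvPolynomial (Fin d) ℝ) :
    aeval x p = eval x p := by
  rw [aeval_def, Algebra.algebraMap_self]
  rfl

/-- the affine-invariant form of Proposition A0 of the paper.
For `θ ∈ (0,1]` there is `C > 0` depending only on `d, k, θ` such that for every
nondegenerate simplex `T ⊆ ℝ^d` (the convex hull of `d+1` affinely independent points),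
every polynomial `p` of total degree at most `k`, and every measurable `S ⊆ T` with
`μ S ≥ θ·μ T`, one has `∫_T p² dμ ≤ C ∫_S p² dμ`. -/
theorem statement_12 (d k : ℕ) (θ : ℝ) (hθ : θ ∈ Set.Ioc (0 : ℝ) 1) :
    ∃ C : ℝ, 0 < C ∧
      ∀ T : Set (Fin d → ℝ),
        (∃ v : Fin (d + 1) → (Fin d → ℝ), AffineIndependent ℝ v ∧
          T = convexHull ℝ (Set.range v)) →
        ∀ p : MvPolynomial (Fin d) ℝ, p.totalDegree ≤ k →
          ∀ S : Set (Fin d → ℝ), MeasurableSet S → S ⊆ T →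
            ENNReal.ofReal θ * volume T ≤ volume S →
            ∫ x in T, (MvPolynomial.eval x p) ^ 2 ≤
              C * ∫ x in S, (MvPolynomial.eval x p) ^ 2 := by
  obtain ⟨C, hC, hcore⟩ := core_ineq d k θ hθ (stdSimp d) (stdSimp_compact d)
    (stdSimp_meas d) (stdSimp_pos d)
  refine ⟨C, hC, ?_⟩
  rintro T ⟨v, hv, rfl⟩ p hpk S hSm hST hSvol
  classical
  -- the linear part
  set w : Fin d → (Fin d → ℝ) := fun j => v j.succ - v 0 with hw
  have hwli : LinearIndependent ℝ w := by
    have h1 := (affineIndependent_iff_linearIndependent_vsub ℝ v 0).1 hv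
    have h2 : w = (fun i : {x : Fin (d+1) // x ≠ 0} => (v ↑i -ᵥ v 0 : Fin d → ℝ)) ∘
        (fun j : Fin d => (⟨Fin.succ j, Fin.succ_ne_zero j⟩ : {x : Fin (d+1) // x ≠ 0})) := by
      funext j
      simp [hw, vsub_eq_sub]
    rw [h2]
    exact h1.comp _ (fun i j h => by
      have := congrArg Subtype.val h
      exact Fin.succ_injective d this)
  set L : (Fin d → ℝ) →ₗ[ℝ] (Fin d → ℝ) := (Pi.basisFun ℝ (Fin d)).constr ℝ w with hL
  have hLapply : ∀ x : Fin d → ℝ, L x = ∑ j : Fin d, x j • w j := by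
    intro x
    rw [hL, Module.Basis.constr_apply_fintype]
    simp [Pi.basisFun_equivFun]
  have hLsingle : ∀ j : Fin d, L (Pi.single j 1) = w j := by
    intro j
    have : (Pi.single j 1 : Fin d → ℝ) = Pi.basisFun ℝ (Fin d) j := by simp
    rw [hL, this, Module.Basis.constr_basis]
  have hLinj : Function.Injective L := by
    rw [← LinearMap.ker_eq_bot]
    rw [Submodule.eq_bot_iff]
    intro x hx
    rw [LinearMap.mem_ker, hLapply] at hx
    have := Fintype.linearIndependent_iff.1 hwli x hx
    funext j
    exact this j
  have hLsurj : Function.Surjective L := (LinearMap.injective_iff_surjective).1 hLinj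
  have hdet : LinearMap.det L ≠ 0 := by
    have h1 := LinearEquiv.isUnit_det' (LinearEquiv.ofBijective L ⟨hLinj, hLsurj⟩)
    have h2 : ((LinearEquiv.ofBijective L ⟨hLinj, hLsurj⟩ : (Fin d → ℝ) ≃ₗ[ℝ] (Fin d → ℝ)) :
        (Fin d → ℝ) →ₗ[ℝ] (Fin d → ℝ)) = L := rfl
    rw [h2] at h1
    exact isUnit_iff_ne_zero.1 h1
  -- the affine map
  set A : (Fin d → ℝ) →ᵃ[ℝ] (Fin d → ℝ) := AffineMap.mk' (fun x => v 0 + L x) L 0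
    (by
      intro x
      simp only [vsub_eq_sub, sub_zero, vadd_eq_add, map_zero, add_zero]
      abel) with hA
  have hAx : ∀ x, A x = v 0 + L x := fun x => rfl
  have hAinj : Function.Injective A := by
    intro x y h
    rw [hAx, hAx] at h
    exact hLinj (add_left_cancel h)
  have hAsurj : Function.Surjective A := by
    intro y
    obtain ⟨x, hx⟩ := hLsurj (y - v 0)
    exact ⟨x, by rw [hAx, hx]; ring⟩
  have hAv : ∀ i, A (stdv d i) = v i := by
    intro i
    refine Fin.cases ?_ (fun j => ?_) i
    · rw [hAx]
      show v 0 + L ((Fin.cons 0 (fun j => Pi.single j 1) : Fin (d+1) → (Fin d → ℝ)) 0) = v 0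
      rw [Fin.cons_zero, map_zero, add_zero]
    · rw [hAx]
      show v 0 + L ((Fin.cons 0 (fun j => Pi.single j 1) : Fin (d+1) → (Fin d → ℝ)) j.succ)
        = v j.succ
      rw [Fin.cons_succ, hLsingle]
      simp [hw]
  have hTim : A '' (stdSimp d) = convexHull ℝ (Set.range v) := by
    rw [stdSimp, AffineMap.image_convexHull, ← Set.range_comp]
    rw [show (⇑A ∘ stdv d) = v from funext hAv]
  -- measure scaling
  have hMim : ∀ s : Set (Fin d → ℝ),
      volume (A '' s) = ENNReal.ofReal |LinearMap.det L| * volume s := by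
    intro s
    have him : A '' s = (fun y => -(v 0) + y) ⁻¹' (L '' s) := by
      ext y
      constructor
      · rintro ⟨z, hz, rfl⟩
        rw [hAx]
        refine Set.mem_preimage.2 ?_
        have : -(v 0) + (v 0 + L z) = L z := by ring
        rw [this]
        exact ⟨z, hz, rfl⟩
      · intro hy
        obtain ⟨z, hz, hzy⟩ := hy
        refine ⟨z, hz, ?_⟩
        rw [hAx]
        have : y = v 0 + (-(v 0) + y) := by ring
        rw [this, hzy]
    rw [him, measure_preimage_add, Measure.addHaar_image_linearMap]
  -- continuity / measurability of A
  have hAcont : Continuous A := by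
    rw [show ⇑A = fun x => v 0 + L x from funext hAx]
    exact continuous_const.add (LinearMap.continuous_of_finiteDimensional L)
  set SΔ : Set (Fin d → ℝ) := ⇑A ⁻¹' S with hSΔ
  have hSΔm : MeasurableSet SΔ := hSm.preimage hAcont.measurable
  have hSim : A '' SΔ = S := Set.image_preimage_eq_of_subset (by
    rw [Set.range_eq_univ.2 hAsurj]; exact Set.subset_univ S)
  have hSΔsub : SΔ ⊆ stdSimp d := by
    intro x hx
    have hxT : A x ∈ convexHull ℝ (Set.range v) := hST hx
    rw [← hTim] at hxT
    obtain ⟨y, hy, hyx⟩ := hxT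
    rwa [← hAinj hyx]
  -- transfer the measure constraint
  set D : ENNReal := ENNReal.ofReal |LinearMap.det L| with hD
  have hD0 : D ≠ 0 := by
    rw [hD]
    simp only [ne_eq, ENNReal.ofReal_eq_zero, not_le]
    exact abs_pos.2 hdet
  have hDtop : D ≠ ⊤ := ENNReal.ofReal_ne_top
  have hvolT : volume (convexHull ℝ (Set.range v)) = D * volume (stdSimp d) := by
    rw [← hTim, hMim]
  have hvolS : volume S = D * volume SΔ := by rw [← hSim, hMim]
  have hSΔvol : ENNReal.ofReal θ * volume (stdSimp d) ≤ volume SΔ := by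
    rw [hvolT, hvolS] at hSvol
    rw [← ENNReal.mul_le_mul_iff_right hD0 hDtop]
    calc D * (ENNReal.ofReal θ * volume (stdSimp d))
        = ENNReal.ofReal θ * (D * volume (stdSimp d)) := by ring
    _ ≤ D * volume SΔ := hSvol
  -- the substituted polynomial
  set fsub : Fin d → MvPolynomial (Fin d) ℝ :=
    fun i => MvPolynomial.C (v 0 i) + ∑ j : Fin d, MvPolynomial.C (w j i) * MvPolynomial.X j
    with hfsub
  have hfdeg : ∀ i, (fsub i).totalDegree ≤ 1 := by
    intro i
    refine le_trans (totalDegree_add _ _) ?_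
    refine max_le (by simp [totalDegree_C]) ?_
    refine le_trans (totalDegree_finset_sum _ _) ?_
    refine Finset.sup_le fun j _ => ?_
    refine le_trans (totalDegree_mul _ _) ?_
    rw [totalDegree_C, zero_add]
    exact le_of_eq (totalDegree_X j)
  set q : MvPolynomial (Fin d) ℝ := bind₁ fsub p with hq
  have hqdeg : q.totalDegree ≤ k := le_trans (totalDegree_bind₁_le fsub hfdeg p) hpk
  have hqeval : ∀ x : Fin d → ℝ, eval x q = eval (A x) p := by
    intro x
    rw [hq, ← aeval_id_eq_eval x (bind₁ fsub p), aeval_bind₁, aeval_id_eq_eval]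
    have harg : (fun i => aeval x (fsub i)) = A x := by
      funext i
      rw [aeval_id_eq_eval]
      show (eval x) (MvPolynomial.C (v 0 i) + ∑ j : Fin d, MvPolynomial.C (w j i) * MvPolynomial.X j) = A x i
      simp only [map_add, eval_C, map_sum, eval_mul, eval_X]
      rw [hAx x, hLapply]
      simp only [Pi.add_apply, Finset.sum_apply, Pi.smul_apply, smul_eq_mul]
      congr 1
      refine Finset.sum_congr rfl fun j _ => ?_
      ring
    rw [harg]
  -- change of variables
  have hCOV : ∀ s : Set (Fin d → ℝ), MeasurableSet s →
      (∫ x in A '' s, (eval x p) ^ 2) = |LinearMap.det L| * ∫ x in s, (eval x q) ^ 2 := by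
    intro s hs
    rw [integral_image_eq_integral_abs_det_fderiv_smul volume hs
      (f' := fun _ => LinearMap.toContinuousLinearMap L)
      (fun x _ => by
        have h1 : HasFDerivAt (fun y => v 0 + L y) (LinearMap.toContinuousLinearMap L) x :=
          ((LinearMap.toContinuousLinearMap L).hasFDerivAt).const_add (v 0)
        have h2 : ⇑A = fun y => v 0 + L y := funext hAx
        rw [h2]
        exact h1.hasFDerivWithinAt)
      (hAinj.injOn) (fun x => (eval x p) ^ 2)]
    have hdet2 : (LinearMap.toContinuousLinearMap L).det = LinearMap.det L := by
      unfold ContinuousLinearMap.det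
      rw [LinearMap.coe_toContinuousLinearMap]
    simp_rw [hdet2, hqeval, smul_eq_mul]
    exact integral_const_mul _ _
  have h1 : (∫ x in convexHull ℝ (Set.range v), (eval x p) ^ 2)
      = |LinearMap.det L| * ∫ x in stdSimp d, (eval x q) ^ 2 := by
    rw [← hTim]
    exact hCOV _ (stdSimp_meas d)
  have h2 : (∫ x in S, (eval x p) ^ 2) = |LinearMap.det L| * ∫ x in SΔ, (eval x q) ^ 2 := by
    rw [← hSim]
    exact hCOV _ hSΔm
  rw [h1, h2]
  have hstep := hcore q hqdeg SΔ hSΔm hSΔsub hSΔvol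
  calc |LinearMap.det L| * ∫ x in stdSimp d, (eval x q) ^ 2
      ≤ |LinearMap.det L| * (C * ∫ x in SΔ, (eval x q) ^ 2) :=
        mul_le_mul_of_nonneg_left hstep (abs_nonneg _)
  _ = C * (|LinearMap.det L| * ∫ x in SΔ, (eval x q) ^ 2) := by ring

end
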